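/- Let l have L-Lipschitz gradient, let E(x) = ‖x‖₁ - α‖x‖₂ + l(x) be coercive, and let 0 < λ < 1/L. Then any sequence generated by FBS, x^{k+1} ∈ prox_{λ r_α}(x^k - λ∇l(x^k)), is bounded, satisfies Σ_k ‖x^{k+1} - x^k‖₂² < ∞ (hence x^{k+1} - x^k → 0), and every limit point x* satisfies x* ∈ prox_{λ r_α}(x* - λ∇l(x*)), i.e., x* is a stationary point of E. -/

import Mathlib

open Finset Filter Set
open scoped RealInnerProductSpace

noncomputable def norm1 {N : ℕ} (x : EuclideanSpace ℝ (Fin N)) : ℝ := ∑ i, |x i|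

noncomputable def normInf {N : ℕ} (x : EuclideanSpace ℝ (Fin N)) : ℝ := ⨆ i, |x i|

noncomputable def Fobj {N : ℕ} (a lam : ℝ) (y x : EuclideanSpace ℝ (Fin N)) : ℝ :=
  norm1 x - a * ‖x‖ + 1 / (2 * lam) * ‖x - y‖ ^ 2

theorem descent {N : ℕ} {L : ℝ}
    (l : EuclideanSpace ℝ (Fin N) → ℝ) (g : EuclideanSpace ℝ (Fin N) → EuclideanSpace ℝ (Fin N))
    (hg : ∀ z, HasGradientAt l (g z) z)
    (hLip : ∀ z w, ‖g z - g w‖ ≤ L * ‖z - w‖) (z w : EuclideanSpace ℝ (Fin N)) :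
    l w ≤ l z + ⟪g z, w - z⟫ + L / 2 * ‖w - z‖ ^ 2 := by
  set d := w - z with hd
  set ψ : ℝ → ℝ := fun t => l (z + t • d) - t * ⟪g z, d⟫ - L / 2 * ‖d‖ ^ 2 * t ^ 2 with hψdef
  have hγ : ∀ t : ℝ, HasDerivAt (fun t : ℝ => z + t • d) d t := by
    intro t
    have := ((hasDerivAt_id t).smul_const d).const_add z
    simpa using this
  have hψ : ∀ t : ℝ, HasDerivAt ψ
      (⟪g (z + t • d), d⟫ - ⟪g z, d⟫ - L * ‖d‖ ^ 2 * t) t := by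
    intro t
    have h2 : HasDerivAt (fun t : ℝ => l (z + t • d)) ⟪g (z + t • d), d⟫ t := by
      have := (hg (z + t • d)).hasFDerivAt.comp_hasDerivAt t (hγ t)
      simpa [Function.comp_def, InnerProductSpace.toDual_apply_apply] using this
    have h3 : HasDerivAt (fun t : ℝ => t * ⟪g z, d⟫) ⟪g z, d⟫ t := by
      simpa using (hasDerivAt_id t).mul_const ⟪g z, d⟫
    have h4 : HasDerivAt (fun t : ℝ => L / 2 * ‖d‖ ^ 2 * t ^ 2) (L * ‖d‖ ^ 2 * t) t := by
      have := (hasDerivAt_pow 2 t).const_mul (L / 2 * ‖d‖ ^ 2)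
      refine this.congr_deriv ?_
      norm_num
      ring
    exact (h2.sub h3).sub h4
  have hanti : AntitoneOn ψ (Set.Icc (0:ℝ) 1) := by
    apply antitoneOn_of_deriv_nonpos (convex_Icc 0 1)
    · exact fun t _ => (hψ t).continuousAt.continuousWithinAt
    · exact fun t _ => (hψ t).differentiableAt.differentiableWithinAt
    · intro t ht
      rw [interior_Icc] at ht
      rw [(hψ t).deriv]
      have h5 : ⟪g (z + t • d), d⟫ - ⟪g z, d⟫ = ⟪g (z + t • d) - g z, d⟫ := by
        rw [inner_sub_left]
      have h6 : ⟪g (z + t • d) - g z, d⟫ ≤ ‖g (z + t • d) - g z‖ * ‖d‖ :=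
        real_inner_le_norm _ _
      have h7 : ‖g (z + t • d) - g z‖ ≤ L * (t * ‖d‖) := by
        have := hLip (z + t • d) z
        simpa [norm_smul, abs_of_pos ht.1] using this
      nlinarith [norm_nonneg d, norm_nonneg (g (z + t • d) - g z), ht.1.le]
  have := hanti (Set.left_mem_Icc.2 zero_le_one) (Set.right_mem_Icc.2 zero_le_one) zero_le_one
  simp only [hψdef] at this
  simp only [one_smul, zero_smul, add_zero, zero_mul, one_mul, one_pow, sub_zero] at this
  have hw : z + d = w := by rw [hd]; abel
  rw [hw] at this
  linarith

set_option maxHeartbeats 1000000 in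
theorem stmt10 {N : ℕ} (a lam L : ℝ) (ha : 0 ≤ a) (hL : 0 < L)
    (hlam : 0 < lam) (hlamL : lam < 1 / L)
    (l : EuclideanSpace ℝ (Fin N) → ℝ)
    (g : EuclideanSpace ℝ (Fin N) → EuclideanSpace ℝ (Fin N))
    (hg : ∀ z, HasGradientAt l (g z) z)
    (hLip : ∀ z w, ‖g z - g w‖ ≤ L * ‖z - w‖)
    (hcoer : ∀ C : ℝ, ∃ R : ℝ, ∀ z, R ≤ ‖z‖ → C ≤ norm1 z - a * ‖z‖ + l z)
    (x : ℕ → EuclideanSpace ℝ (Fin N))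
    (hstep : ∀ k, IsMinOn (Fobj a lam (x k - lam • g (x k))) Set.univ (x (k + 1))) :
    (∃ R, ∀ k, ‖x k‖ ≤ R) ∧
      (Summable fun k => ‖x (k + 1) - x k‖ ^ 2) ∧
      Tendsto (fun k => x (k + 1) - x k) atTop (nhds 0) ∧
      ∀ xs, MapClusterPt xs atTop x →
        IsMinOn (Fobj a lam (xs - lam • g xs)) Set.univ xs := by
  set E : EuclideanSpace ℝ (Fin N) → ℝ := fun z => norm1 z - a * ‖z‖ + l z with hE
  set c : ℝ := 1 / (2 * lam) - L / 2 with hc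
  have hlamne : (2 : ℝ) * lam ≠ 0 := by positivity
  have hcpos : 0 < c := by
    have h1 : lam * L < 1 := (lt_div_iff₀ hL).mp hlamL
    rw [hc, sub_pos, div_lt_div_iff₀ (by norm_num) (by positivity)]
    nlinarith
  -- key one-step inequality
  have hkey : ∀ k, E (x (k + 1)) + c * ‖x (k + 1) - x k‖ ^ 2 ≤ E (x k) := by
    intro k
    set d := x (k + 1) - x k with hd
    have hmin := isMinOn_iff.mp (hstep k) (x k) (Set.mem_univ _)
    have hexp1 : x (k + 1) - (x k - lam • g (x k)) = d + lam • g (x k) := by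
      rw [hd]; abel
    have hexp2 : x k - (x k - lam • g (x k)) = lam • g (x k) := by abel
    rw [Fobj, Fobj, hexp1, hexp2] at hmin
    have hsq : ‖d + lam • g (x k)‖ ^ 2
        = ‖d‖ ^ 2 + 2 * (lam * ⟪d, g (x k)⟫) + ‖lam • g (x k)‖ ^ 2 := by
      rw [norm_add_sq_real, real_inner_smul_right]
    rw [hsq] at hmin
    have hmin2 : norm1 (x (k + 1)) - a * ‖x (k + 1)‖ + 1 / (2 * lam) * ‖d‖ ^ 2
        + ⟪d, g (x k)⟫ ≤ norm1 (x k) - a * ‖x k‖ := by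
      have hid : 1 / (2 * lam) * (‖d‖ ^ 2 + 2 * (lam * ⟪d, g (x k)⟫) + ‖lam • g (x k)‖ ^ 2)
          = 1 / (2 * lam) * ‖d‖ ^ 2 + ⟪d, g (x k)⟫ + 1 / (2 * lam) * ‖lam • g (x k)‖ ^ 2 := by
        field_simp
      rw [hid] at hmin
      linarith
    have hdesc := descent l g hg hLip (x k) (x (k + 1))
    rw [← hd] at hdesc
    have hcomm : ⟪g (x k), d⟫ = ⟪d, g (x k)⟫ := real_inner_comm _ _
    rw [hcomm] at hdesc
    simp only [hE, hc]
    linarith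
  -- E continuous
  have hlcont : Continuous l := by
    have : Differentiable ℝ l := fun z => (hg z).differentiableAt
    exact this.continuous
  have hn1cont : Continuous (norm1 : EuclideanSpace ℝ (Fin N) → ℝ) := by
    apply continuous_finset_sum
    intro i _
    exact ((EuclideanSpace.proj (𝕜 := ℝ) i).continuous).abs
  have hEcont : Continuous E :=
    (hn1cont.sub (continuous_const.mul continuous_norm)).add hlcont
  -- lower bound on E
  obtain ⟨R0, hR0⟩ := hcoer 0
  set R1 : ℝ := max R0 0 with hR1
  have hK : IsCompact (Metric.closedBall (0 : EuclideanSpace ℝ (Fin N)) R1) :=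
    isCompact_closedBall _ _
  obtain ⟨z0, hz0mem, hz0⟩ := hK.exists_isMinOn
    ⟨0, Metric.mem_closedBall_self (le_max_right _ _)⟩ hEcont.continuousOn
  set m : ℝ := min (E z0) 0 with hm
  have hEm : ∀ z, m ≤ E z := by
    intro z
    by_cases hcase : ‖z‖ ≤ R1
    · have : z ∈ Metric.closedBall (0 : EuclideanSpace ℝ (Fin N)) R1 := by
        simpa [Metric.mem_closedBall, dist_zero_right] using hcase
      exact le_trans (min_le_left _ _) (hz0 this)
    · push_neg at hcase
      have : R0 ≤ ‖z‖ := le_trans (le_max_left _ _) hcase.le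
      exact le_trans (min_le_right _ _) (hR0 z this)
  -- E (x k) decreasing, bounded by E (x 0)
  have hdec : ∀ k, E (x (k + 1)) ≤ E (x k) := by
    intro k
    have := hkey k
    nlinarith [sq_nonneg ‖x (k + 1) - x k‖, hcpos]
  have hE0 : ∀ k, E (x k) ≤ E (x 0) := by
    intro k
    induction k with
    | zero => exact le_refl _
    | succ n ih => exact le_trans (hdec n) ih
  -- boundedness
  have hbdd : ∃ R, ∀ k, ‖x k‖ ≤ R := by
    obtain ⟨R2, hR2⟩ := hcoer (E (x 0) + 1)
    refine ⟨|R2|, fun k => ?_⟩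
    by_contra hcon
    push_neg at hcon
    have h1 : R2 ≤ ‖x k‖ := le_trans (le_abs_self _) hcon.le
    have h2 := hR2 (x k) h1
    have h3 := hE0 k
    simp only [hE] at h3 h2 ⊢
    linarith
  -- summability
  have hsum : Summable fun k => ‖x (k + 1) - x k‖ ^ 2 := by
    apply summable_of_sum_range_le (c := (E (x 0) - m) / c)
      (fun n => sq_nonneg _)
    intro n
    have htel : ∑ i ∈ Finset.range n, (E (x i) - E (x (i + 1))) = E (x 0) - E (x n) :=
      Finset.sum_range_sub' (fun i => E (x i)) n
    have hle : c * ∑ i ∈ Finset.range n, ‖x (i + 1) - x i‖ ^ 2 ≤ E (x 0) - E (x n) := by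
      rw [← htel, Finset.mul_sum]
      apply Finset.sum_le_sum
      intro i _
      have := hkey i
      linarith
    have hEn := hEm (x n)
    rw [le_div_iff₀ hcpos, mul_comm]
    linarith
  -- tendsto 0
  have htend : Tendsto (fun k => x (k + 1) - x k) atTop (nhds 0) := by
    have h1 : Tendsto (fun k => ‖x (k + 1) - x k‖ ^ 2) atTop (nhds 0) :=
      hsum.tendsto_atTop_zero
    have h2 : Tendsto (fun k => ‖x (k + 1) - x k‖) atTop (nhds 0) := by
      have h3 := (Real.continuous_sqrt.tendsto 0).comp h1
      rw [Real.sqrt_zero] at h3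
      exact h3.congr fun k => Real.sqrt_sq (norm_nonneg _)
    exact tendsto_zero_iff_norm_tendsto_zero.mpr h2
  refine ⟨hbdd, hsum, htend, ?_⟩
  -- cluster points
  intro xs hcl
  obtain ⟨φ, hφmono, hφt⟩ := TopologicalSpace.FirstCountableTopology.tendsto_subseq hcl
  have hgcont : Continuous g := by
    have : LipschitzWith L.toNNReal g := by
      apply LipschitzWith.of_dist_le_mul
      intro z w
      rw [dist_eq_norm, dist_eq_norm]
      calc ‖g z - g w‖ ≤ L * ‖z - w‖ := hLip z w
        _ = (L.toNNReal : ℝ) * ‖z - w‖ := by rw [Real.coe_toNNReal L hL.le]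
    exact this.continuous
  have hx1 : Tendsto (fun n => x (φ n + 1)) atTop (nhds xs) := by
    have hd : Tendsto (fun n => x (φ n + 1) - x (φ n)) atTop (nhds 0) :=
      htend.comp hφmono.tendsto_atTop
    have := hφt.add hd
    simp only [Function.comp] at this ⊢
    convert this using 2 with n
    · abel
    · simp
  have hy : Tendsto (fun n => x (φ n) - lam • g (x (φ n))) atTop
      (nhds (xs - lam • g xs)) := by
    apply Tendsto.sub hφt
    exact (((hgcont.tendsto xs).comp hφt).const_smul lam)
  rw [isMinOn_iff]
  intro u _
  set ys := xs - lam • g xs with hys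
  have hn1lim : Tendsto (fun n => norm1 (x (φ n + 1))) atTop (nhds (norm1 xs)) :=
    (hn1cont.tendsto xs).comp hx1
  have hnormlim : Tendsto (fun n => ‖x (φ n + 1)‖) atTop (nhds ‖xs‖) :=
    (continuous_norm.tendsto xs).comp hx1
  have hsublim : Tendsto (fun n => ‖x (φ n + 1) - (x (φ n) - lam • g (x (φ n)))‖ ^ 2) atTop
      (nhds (‖xs - ys‖ ^ 2)) :=
    ((hx1.sub hy).norm).pow 2
  have h1 : Tendsto (fun n => Fobj a lam (x (φ n) - lam • g (x (φ n))) (x (φ n + 1))) atTop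
      (nhds (Fobj a lam ys xs)) := by
    unfold Fobj
    exact (hn1lim.sub (tendsto_const_nhds.mul hnormlim)).add
      (tendsto_const_nhds.mul hsublim)
  have hsublim2 : Tendsto (fun n => ‖u - (x (φ n) - lam • g (x (φ n)))‖ ^ 2) atTop
      (nhds (‖u - ys‖ ^ 2)) :=
    ((tendsto_const_nhds.sub hy).norm).pow 2
  have h2 : Tendsto (fun n => Fobj a lam (x (φ n) - lam • g (x (φ n))) u) atTop
      (nhds (Fobj a lam ys u)) := by
    unfold Fobj
    exact tendsto_const_nhds.add (tendsto_const_nhds.mul hsublim2)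
  exact le_of_tendsto_of_tendsto' h1 h2
    (fun n => isMinOn_iff.mp (hstep (φ n)) u (Set.mem_univ u))
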